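/- arXiv:1702.08783 — 3 statements merged into one kernel-verified Lean document; each statement's English description precedes it below -/
import Mathlib

section
/- Let z_1, ..., z_M be i.i.d. random variables, each the absolute value of a Gaussian random variable with mean 0 and variance 1/2 (i.e., folded normal with pdf f(x) = (2/√π) e^{-x²} for x ≥ 0). Then the CDF of Z = (z_1 + ... + z_M)² satisfies F_Z(z) = (2^M/π^{M/2}) · z^{M/2}/M! · (1 + o(1)) as z → 0⁺; in particular, F_Z(z) ≤ (2^M/π^{M/2}) · z^{M/2}/M! for all z ≥ 0. -/
open MeasureTheory ProbabilityTheory Real Filter Topology Set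

/-- The folded normal distribution with underlying variance `1/2`:
density `(2/√π) e^{-x²}` on `[0, ∞)`. -/
noncomputable def foldedNormal : Measure ℝ :=
  MeasureTheory.volume.withDensity fun x =>
    ENNReal.ofReal (Set.indicator (Set.Ici 0) (fun x => 2 / Real.sqrt π * Real.exp (-x ^ 2)) x)


lemma fn_density_meas : Measurable fun x : ℝ =>
    ENNReal.ofReal (Set.indicator (Set.Ici 0) (fun x => 2 / Real.sqrt π * Real.exp (-x ^ 2)) x) := by
  apply ENNReal.measurable_ofReal.comp
  exact Measurable.indicator (by fun_prop) measurableSet_Ici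

lemma fn_lintegral (g : ℝ → ENNReal) :
    ∫⁻ x, g x ∂foldedNormal
      = ∫⁻ x in Ici 0, ENNReal.ofReal (2 / Real.sqrt π * Real.exp (-x ^ 2)) * g x := by
  rw [foldedNormal, lintegral_withDensity_eq_lintegral_mul_non_measurable _ fn_density_meas]
  · rw [← lintegral_indicator measurableSet_Ici]
    congr 1; ext x
    by_cases hx : x ∈ Ici (0:ℝ) <;> simp [hx]
  · exact ae_of_all _ fun x => ENNReal.ofReal_lt_top

lemma exp_neg_sq_integrable : Integrable (fun x : ℝ => 2 / Real.sqrt π * Real.exp (-x ^ 2)) := by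
  have := integrable_exp_neg_mul_sq (b := 1) one_pos
  simpa using this.const_mul (2 / Real.sqrt π)

instance fn_prob : IsProbabilityMeasure foldedNormal := by
  constructor
  have h := fn_lintegral (fun _ => 1)
  simp only [lintegral_one, measure_univ, mul_one] at h
  rw [h, ← ofReal_integral_eq_lintegral_ofReal (exp_neg_sq_integrable.integrableOn)
    (ae_of_all _ fun x => by positivity)]
  rw [MeasureTheory.integral_Ici_eq_integral_Ioi, integral_const_mul]
  have : ∫ x in Ioi (0:ℝ), Real.exp (-x ^ 2) = Real.sqrt π / 2 := by
    have := integral_gaussian_Ioi 1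
    simpa using this
  rw [this]
  have hπ : Real.sqrt π ≠ 0 := by positivity
  rw [div_mul_div_comm, mul_comm]
  field_simp
  exact ENNReal.ofReal_one

lemma fn_neg_null : foldedNormal (Iio 0) = 0 := by
  rw [foldedNormal, withDensity_apply _ measurableSet_Iio]
  rw [setLIntegral_congr_fun (g := fun _ => 0) measurableSet_Iio
    (fun x (hx : x < 0) => by
      have : x ∉ Ici (0:ℝ) := by simpa using hx
      simp [Set.indicator_of_notMem this])]
  simp

noncomputable abbrev μpi (n : ℕ) : Measure (Fin n → ℝ) := Measure.pi fun _ => foldedNormal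

lemma sumSet_meas (n : ℕ) (s : ℝ) : MeasurableSet {x : Fin n → ℝ | ∑ i, x i ≤ s} :=
  measurableSet_le (by fun_prop) measurable_const

lemma coord_neg_null (n : ℕ) (i : Fin n) : μpi n {x | x i < 0} = 0 := by
  have : {x : Fin n → ℝ | x i < 0} = (fun x : Fin n → ℝ => x i) ⁻¹' Iio 0 := rfl
  rw [this]
  exact Measure.pi_eval_preimage_null (μ := fun _ : Fin n => foldedNormal) fn_neg_null

lemma sum_neg_null (n : ℕ) (s : ℝ) (hs : s < 0) : μpi n {x | ∑ i, x i ≤ s} = 0 := by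
  have hsub : {x : Fin n → ℝ | ∑ i, x i ≤ s} ⊆ ⋃ i, {x | x i < 0} := by
    intro x hx
    by_contra h
    simp only [mem_iUnion, mem_setOf_eq, not_exists, not_lt] at h
    have : (0:ℝ) ≤ ∑ i, x i := Finset.sum_nonneg fun i _ => h i
    exact absurd (le_trans this hx) (not_le.2 hs)
  exact measure_mono_null hsub (measure_iUnion_null fun i => coord_neg_null n i)

lemma prod_step (n : ℕ) (s : ℝ) :
    μpi (n+1) {x | ∑ i, x i ≤ s}
      = ∫⁻ c, μpi n {y | ∑ i, y i ≤ s - c} ∂foldedNormal := by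
  have hmp := measurePreserving_piFinSuccAbove (fun _ : Fin (n+1) => foldedNormal) 0
  set e := MeasurableEquiv.piFinSuccAbove (fun _ : Fin (n+1) => ℝ) 0 with he
  have hT : MeasurableSet {p : ℝ × (Fin n → ℝ) | p.1 + ∑ i, p.2 i ≤ s} :=
    measurableSet_le (by fun_prop) measurable_const
  have key : {x : Fin (n+1) → ℝ | ∑ i, x i ≤ s}
      = e ⁻¹' {p : ℝ × (Fin n → ℝ) | p.1 + ∑ i, p.2 i ≤ s} := by
    ext x
    simp only [mem_preimage, mem_setOf_eq, he, MeasurableEquiv.piFinSuccAbove_apply]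
    rw [Fin.sum_univ_succAbove x 0]
    simp [Fin.insertNthEquiv, Fin.tail, Fin.succAbove]
  rw [key, ← Measure.map_apply e.measurable hT, hmp.map_eq, Measure.prod_apply hT]
  congr 1
  ext c
  congr 1
  ext y
  simp only [mem_preimage, mem_setOf_eq]
  constructor <;> intro h <;> linarith

lemma H_int (n : ℕ) (s : ℝ) (hs : 0 ≤ s) (K : ℝ) (hK : 0 ≤ K) :
    ∫⁻ c in Icc 0 s, ENNReal.ofReal (K * (s - c) ^ n)
      = ENNReal.ofReal (K * s ^ (n+1) / (n+1)) := by
  rw [← ofReal_integral_eq_lintegral_ofReal]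
  · congr 1
    rw [MeasureTheory.integral_Icc_eq_integral_Ioc,
      ← intervalIntegral.integral_of_le hs, intervalIntegral.integral_const_mul]
    have : ∫ c in (0:ℝ)..s, (s - c) ^ n = s ^ (n+1) / (n+1) := by
      rw [intervalIntegral.integral_comp_sub_left (fun u => u ^ n) s]
      simp [integral_pow]
    rw [this, mul_div_assoc]
  · exact ((continuous_const.mul ((continuous_const.sub continuous_id).pow n)).integrableOn_Icc)
  · filter_upwards [ae_restrict_mem measurableSet_Icc] with c hc
    have : (0:ℝ) ≤ s - c := by linarith [hc.2]
    positivity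

lemma key_bounds (n : ℕ) : ∀ s : ℝ, 0 ≤ s →
    μpi n {x | ∑ i, x i ≤ s} ≤ ENNReal.ofReal ((2 / Real.sqrt π) ^ n / n.factorial * s ^ n)
    ∧ ENNReal.ofReal (Real.exp (-s ^ 2) * ((2 / Real.sqrt π) ^ n / n.factorial * s ^ n))
      ≤ μpi n {x | ∑ i, x i ≤ s} := by
  induction n with
  | zero =>
    intro s hs
    have huniv : {x : Fin 0 → ℝ | ∑ i, x i ≤ s} = univ := by
      ext x; simp [hs]
    rw [huniv]
    have h1 : μpi 0 univ = 1 := measure_univ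
    constructor
    · rw [h1]; simp
    · rw [h1]
      apply ENNReal.ofReal_le_one.2
      simp only [pow_zero, Nat.factorial_zero, Nat.cast_one, div_one, one_mul, mul_one]
      exact Real.exp_le_one_iff.2 (neg_nonpos.2 (sq_nonneg s))
  | succ n ih =>
    intro s hs
    rw [prod_step n s, fn_lintegral]
    have hsplit : Ici (0:ℝ) = Icc 0 s ∪ Ioi s := (Set.Icc_union_Ioi_eq_Ici hs).symm
    have hdisj : Disjoint (Icc (0:ℝ) s) (Ioi s) := by
      rw [Set.disjoint_left]; intro c hc hc'
      exact absurd hc.2 (not_le.2 hc')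
    rw [hsplit, lintegral_union measurableSet_Ioi hdisj]
    have hIoi : ∫⁻ c in Ioi s,
        ENNReal.ofReal (2 / Real.sqrt π * Real.exp (-c ^ 2)) * μpi n {y | ∑ i, y i ≤ s - c} = 0 := by
      rw [setLIntegral_congr_fun (g := fun _ => 0) measurableSet_Ioi
        (fun c (hc : s < c) => by
          rw [sum_neg_null n _ (by linarith), mul_zero])]
      simp
    rw [hIoi, add_zero]
    constructor
    · calc ∫⁻ c in Icc 0 s,
          ENNReal.ofReal (2 / Real.sqrt π * Real.exp (-c ^ 2)) * μpi n {y | ∑ i, y i ≤ s - c}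
          ≤ ∫⁻ c in Icc 0 s,
            ENNReal.ofReal (2 / Real.sqrt π * ((2 / Real.sqrt π) ^ n / n.factorial) * (s - c) ^ n) := by
            apply lintegral_mono_ae
            filter_upwards [ae_restrict_mem measurableSet_Icc] with c hc
            have h1 : ENNReal.ofReal (2 / Real.sqrt π * Real.exp (-c ^ 2))
                ≤ ENNReal.ofReal (2 / Real.sqrt π) := by
              apply ENNReal.ofReal_le_ofReal
              exact mul_le_of_le_one_right (by positivity)
                (Real.exp_le_one_iff.2 (neg_nonpos.2 (sq_nonneg c)))
            have h2 := (ih (s - c) (by linarith [hc.2])).1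
            calc ENNReal.ofReal (2 / Real.sqrt π * Real.exp (-c ^ 2)) * μpi n {y | ∑ i, y i ≤ s - c}
                ≤ ENNReal.ofReal (2 / Real.sqrt π)
                  * ENNReal.ofReal ((2 / Real.sqrt π) ^ n / n.factorial * (s - c) ^ n) :=
                  mul_le_mul' h1 h2
              _ = _ := by
                  rw [← ENNReal.ofReal_mul (by positivity : (0:ℝ) ≤ 2 / Real.sqrt π)]
                  congr 1
                  ring
        _ = ENNReal.ofReal ((2 / Real.sqrt π) ^ (n+1) / (n+1).factorial * s ^ (n+1)) := by
            rw [H_int n s hs _ (by positivity)]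
            congr 1
            rw [Nat.factorial_succ]
            push_cast
            have hf : (n.factorial : ℝ) ≠ 0 := Nat.cast_ne_zero.2 n.factorial_ne_zero
            have hπ : Real.sqrt π ≠ 0 := by positivity
            field_simp
            ring_nf
            rw [mul_inv_cancel₀ hπ, one_mul]
    · calc ENNReal.ofReal (Real.exp (-s ^ 2)
            * ((2 / Real.sqrt π) ^ (n+1) / (n+1).factorial * s ^ (n+1)))
          = ∫⁻ c in Icc 0 s, ENNReal.ofReal
              (Real.exp (-s ^ 2) * (2 / Real.sqrt π * ((2 / Real.sqrt π) ^ n / n.factorial))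
                * (s - c) ^ n) := by
            rw [H_int n s hs _ (by positivity)]
            congr 1
            rw [Nat.factorial_succ]
            push_cast
            have hf : (n.factorial : ℝ) ≠ 0 := Nat.cast_ne_zero.2 n.factorial_ne_zero
            have hπ : Real.sqrt π ≠ 0 := by positivity
            field_simp
            ring_nf
            rw [mul_inv_cancel₀ hπ, one_mul]
        _ ≤ ∫⁻ c in Icc 0 s,
            ENNReal.ofReal (2 / Real.sqrt π * Real.exp (-c ^ 2)) * μpi n {y | ∑ i, y i ≤ s - c} := by
            apply lintegral_mono_ae
            filter_upwards [ae_restrict_mem measurableSet_Icc] with c hc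
            have hsc : (0:ℝ) ≤ s - c := by linarith [hc.2]
            have h2 := (ih (s - c) hsc).2
            calc ENNReal.ofReal (Real.exp (-s ^ 2)
                  * (2 / Real.sqrt π * ((2 / Real.sqrt π) ^ n / n.factorial)) * (s - c) ^ n)
                ≤ ENNReal.ofReal (2 / Real.sqrt π * Real.exp (-c ^ 2))
                  * ENNReal.ofReal (Real.exp (-(s - c) ^ 2)
                      * ((2 / Real.sqrt π) ^ n / n.factorial * (s - c) ^ n)) := by
                  rw [← ENNReal.ofReal_mul (by positivity)]
                  apply ENNReal.ofReal_le_ofReal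
                  have hexp : Real.exp (-s ^ 2) ≤ Real.exp (-c ^ 2) * Real.exp (-(s - c) ^ 2) := by
                    rw [← Real.exp_add]
                    apply Real.exp_le_exp.2
                    nlinarith [hc.1, hc.2]
                  have hnn : (0:ℝ) ≤ (2 / Real.sqrt π * ((2 / Real.sqrt π) ^ n / n.factorial))
                      * (s - c) ^ n := by positivity
                  nlinarith [mul_le_mul_of_nonneg_right hexp hnn]
              _ ≤ _ := mul_le_mul' le_rfl h2

theorem stmt_0 {Ω : Type*} [MeasurableSpace Ω] (P : Measure Ω) [IsProbabilityMeasure P]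
    (M : ℕ) (hM : 1 ≤ M) (z : Fin M → Ω → ℝ)
    (hmeas : ∀ m, Measurable (z m))
    (hindep : iIndepFun z P)
    (hlaw : ∀ m, P.map (z m) = foldedNormal)
    (F : ℝ → ℝ) (hF : ∀ t, F t = (P {ω | (∑ m, z m ω) ^ 2 ≤ t}).toReal) :
    Tendsto (fun t : ℝ =>
        F t / (2 ^ M / π ^ ((M : ℝ) / 2) * t ^ ((M : ℝ) / 2) / (Nat.factorial M)))
      (𝓝[>] 0) (𝓝 1) ∧
    ∀ t : ℝ, 0 ≤ t →
      F t ≤ 2 ^ M / π ^ ((M : ℝ) / 2) * t ^ ((M : ℝ) / 2) / (Nat.factorial M) := by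
  -- the joint law is the product measure
  have hzm : Measurable fun ω => fun i => z i ω := measurable_pi_lambda _ hmeas
  have hmap : P.map (fun ω => fun i => z i ω) = μpi M := by
    refine (Measure.pi_eq (μ := fun _ : Fin M => foldedNormal) fun s hs => ?_).symm
    rw [Measure.map_apply hzm (MeasurableSet.univ_pi hs)]
    have hpre : (fun ω => fun i => z i ω) ⁻¹' (univ.pi s) = ⋂ i, z i ⁻¹' s i := by
      ext ω; simp [Set.mem_univ_pi]
    rw [hpre, hindep.meas_iInter fun i => ⟨s i, hs i, rfl⟩]
    congr 1
    ext i
    rw [← Measure.map_apply (hmeas i) (hs i), hlaw i]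
  -- express F via the product measure
  have hFt : ∀ t, F t = (μpi M {x : Fin M → ℝ | (∑ i, x i) ^ 2 ≤ t}).toReal := by
    intro t
    rw [hF t, ← hmap, Measure.map_apply hzm
      (measurableSet_le (by fun_prop) measurable_const)]
    rfl
  -- a.e. all coordinates nonnegative
  have hN : μpi M (⋃ i, {x : Fin M → ℝ | x i < 0}) = 0 :=
    measure_iUnion_null fun i => coord_neg_null M i
  -- sets agree up to null set
  have hset : ∀ t : ℝ, 0 ≤ t →
      μpi M {x : Fin M → ℝ | (∑ i, x i) ^ 2 ≤ t}
        = μpi M {x : Fin M → ℝ | ∑ i, x i ≤ Real.sqrt t} := by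
    intro t ht
    apply measure_congr
    rw [Filter.eventuallyEq_set]
    have : ∀ x : Fin M → ℝ, x ∉ ⋃ i, {y : Fin M → ℝ | y i < 0} →
        ((∑ i, x i) ^ 2 ≤ t ↔ ∑ i, x i ≤ Real.sqrt t) := by
      intro x hx
      simp only [mem_iUnion, mem_setOf_eq, not_exists, not_lt] at hx
      have hsum : (0:ℝ) ≤ ∑ i, x i := Finset.sum_nonneg fun i _ => hx i
      constructor
      · intro h
        calc ∑ i, x i = Real.sqrt ((∑ i, x i) ^ 2) := (Real.sqrt_sq hsum).symm
          _ ≤ Real.sqrt t := Real.sqrt_le_sqrt h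
      · intro h
        calc (∑ i, x i) ^ 2 ≤ Real.sqrt t ^ 2 := by
              apply pow_le_pow_left₀ hsum h
          _ = t := Real.sq_sqrt ht
    filter_upwards [measure_eq_zero_iff_ae_notMem.1 hN] with x hx
    exact this x hx
  -- the bound function
  set B : ℝ → ℝ := fun t => 2 ^ M / π ^ ((M : ℝ) / 2) * t ^ ((M : ℝ) / 2) / (Nat.factorial M)
    with hB
  have hBval : ∀ t : ℝ, 0 ≤ t →
      (2 / Real.sqrt π) ^ M / M.factorial * Real.sqrt t ^ M = B t := by
    intro t ht
    rw [hB]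
    have h1 : Real.sqrt t ^ M = t ^ ((M : ℝ) / 2) := by
      rw [Real.sqrt_eq_rpow, ← Real.rpow_natCast (t ^ ((1:ℝ)/2)) M, ← Real.rpow_mul ht]
      ring_nf
    have h2 : Real.sqrt π ^ M = π ^ ((M : ℝ) / 2) := by
      rw [Real.sqrt_eq_rpow, ← Real.rpow_natCast (π ^ ((1:ℝ)/2)) M,
        ← Real.rpow_mul Real.pi_pos.le]
      ring_nf
    rw [div_pow, h1, h2]
    ring
  have hBpos : ∀ t : ℝ, 0 < t → 0 < B t := by
    intro t ht
    rw [hB]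
    have := Real.rpow_pos_of_pos Real.pi_pos ((M:ℝ)/2)
    have := Real.rpow_pos_of_pos ht ((M:ℝ)/2)
    have := M.factorial_pos
    positivity
  have hB0 : ∀ t : ℝ, 0 ≤ t → 0 ≤ B t := by
    intro t ht
    rcases eq_or_lt_of_le ht with h'|h'
    · simp [hB, ← h', Real.zero_rpow (by positivity : ((M:ℝ)/2) ≠ 0)]
    · exact (hBpos t h').le
  -- main bounds on F
  have hub : ∀ t : ℝ, 0 ≤ t → F t ≤ B t := by
    intro t ht
    rw [hFt t, hset t ht]
    have h := (key_bounds M (Real.sqrt t) (Real.sqrt_nonneg t)).1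
    rw [hBval t ht] at h
    calc (μpi M {x : Fin M → ℝ | ∑ i, x i ≤ Real.sqrt t}).toReal
        ≤ (ENNReal.ofReal (B t)).toReal := ENNReal.toReal_mono ENNReal.ofReal_ne_top h
      _ = B t := ENNReal.toReal_ofReal (hB0 t ht)
  have hlb : ∀ t : ℝ, 0 ≤ t → Real.exp (-t) * B t ≤ F t := by
    intro t ht
    rw [hFt t, hset t ht]
    have h := (key_bounds M (Real.sqrt t) (Real.sqrt_nonneg t)).2
    rw [hBval t ht, Real.sq_sqrt ht] at h
    calc Real.exp (-t) * B t = (ENNReal.ofReal (Real.exp (-t) * B t)).toReal := by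
          rw [ENNReal.toReal_ofReal]
          have h0 : 0 ≤ B t := hB0 t ht
          positivity
      _ ≤ (μpi M {x : Fin M → ℝ | ∑ i, x i ≤ Real.sqrt t}).toReal :=
          ENNReal.toReal_mono (measure_ne_top _ _) h
  refine ⟨?_, hub⟩
  -- squeeze
  have hge : ∀ᶠ t in 𝓝[>] (0:ℝ), Real.exp (-t) ≤ F t / B t := by
    filter_upwards [self_mem_nhdsWithin] with t (ht : 0 < t)
    rw [le_div_iff₀ (hBpos t ht)]
    exact hlb t ht.le
  have hle : ∀ᶠ t in 𝓝[>] (0:ℝ), F t / B t ≤ 1 := by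
    filter_upwards [self_mem_nhdsWithin] with t (ht : 0 < t)
    rw [div_le_one (hBpos t ht)]
    exact hub t ht.le
  have h1 : Tendsto (fun t : ℝ => Real.exp (-t)) (𝓝[>] 0) (𝓝 1) := by
    have : Tendsto (fun t : ℝ => Real.exp (-t)) (𝓝 0) (𝓝 1) := by
      have := (Real.continuous_exp.comp continuous_neg).tendsto 0
      simpa [Function.comp_def] using this
    exact this.mono_left nhdsWithin_le_nhds
  exact tendsto_of_tendsto_of_tendsto_of_le_of_le' h1 tendsto_const_nhds hge hle
end

section
/- Let X and Z be independent nonnegative random variables whose CDFs satisfy F_X(x) = A x^{a}(1+o(1)) and F_Z(z) = B z^{b}(1+o(1)) as the arguments tend to 0⁺, with A, B, a, b > 0. Then the CDF of X + Z satisfies F_{X+Z}(y) = A B a · Beta(b+1, a) · y^{a+b} (1+o(1)) as y → 0⁺, where Beta is the Beta function. -/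
open MeasureTheory ProbabilityTheory Real Filter Topology Set intervalIntegral ENNReal

/-- The Beta function `B(p, q) = Γ(p)Γ(q)/Γ(p+q)`. -/
noncomputable def betaFn (p q : ℝ) : ℝ := Real.Gamma p * Real.Gamma q / Real.Gamma (p + q)

lemma betaFn_pos {p q : ℝ} (hp : 0 < p) (hq : 0 < q) : 0 < betaFn p q := by
  unfold betaFn
  have := Real.Gamma_pos_of_pos hp
  have := Real.Gamma_pos_of_pos hq
  have := Real.Gamma_pos_of_pos (by linarith : 0 < p + q)
  positivity

lemma betaIntegral_eq_betaFn {p q : ℝ} (hp : 0 < p) (hq : 0 < q) :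
    Complex.betaIntegral p q = ((betaFn p q : ℝ) : ℂ) := by
  have h := Complex.Gamma_mul_Gamma_eq_betaIntegral (s := (p:ℂ)) (t := (q:ℂ))
    (by simpa using hp) (by simpa using hq)
  have hpq : ((p:ℂ) + q) = ((p + q : ℝ) : ℂ) := by push_cast; ring
  rw [hpq, Complex.Gamma_ofReal, Complex.Gamma_ofReal, Complex.Gamma_ofReal] at h
  have hne : ((Real.Gamma (p+q) : ℝ) : ℂ) ≠ 0 := by
    simpa using (Real.Gamma_pos_of_pos (by linarith)).ne'
  rw [betaFn, Complex.ofReal_div, Complex.ofReal_mul, eq_div_iff hne]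
  linear_combination -h

lemma real_beta_scaled {p q y : ℝ} (hp : 0 < p) (hq : 0 < q) (hy : 0 < y) :
    ∫ x in (0:ℝ)..y, x ^ (p - 1) * (y - x) ^ (q - 1) = y ^ (p + q - 1) * betaFn p q := by
  have h := Complex.betaIntegral_scaled (p:ℂ) (q:ℂ) hy
  have hL : (∫ x in (0:ℝ)..y, (x:ℂ) ^ ((p:ℂ) - 1) * ((y:ℂ) - (x:ℂ)) ^ ((q:ℂ) - 1)) =
      ((∫ x in (0:ℝ)..y, x ^ (p - 1) * (y - x) ^ (q - 1) : ℝ) : ℂ) := by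
    rw [← intervalIntegral.integral_ofReal]
    apply intervalIntegral.integral_congr
    intro x hx
    rw [Set.uIcc_of_le hy.le] at hx
    have hx0 : (0:ℝ) ≤ x := hx.1
    have hyx : (0:ℝ) ≤ y - x := by linarith [hx.2]
    dsimp only
    rw [show ((p:ℂ) - 1) = ((p - 1 : ℝ) : ℂ) by push_cast; ring,
      show ((q:ℂ) - 1) = ((q - 1 : ℝ) : ℂ) by push_cast; ring,
      show ((y:ℂ) - (x:ℂ)) = ((y - x : ℝ) : ℂ) by push_cast; ring,
      ← Complex.ofReal_cpow hx0, ← Complex.ofReal_cpow hyx, Complex.ofReal_mul]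
  rw [hL, betaIntegral_eq_betaFn hp hq] at h
  have hR : ((y:ℂ)) ^ ((p:ℂ) + q - 1) = ((y ^ (p + q - 1) : ℝ) : ℂ) := by
    rw [show ((p:ℂ) + q - 1) = ((p + q - 1 : ℝ) : ℂ) by push_cast; ring,
      ← Complex.ofReal_cpow hy.le]
  rw [hR] at h
  exact_mod_cast h

lemma beta_integral_value {a b y : ℝ} (ha : 0 < a) (hb : 0 < b) (hy : 0 < y) :
    ∫ s in (0:ℝ)..y, s ^ a * (y - s) ^ (b - 1) = betaFn (a + 1) b * y ^ (a + b) := by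
  have h := real_beta_scaled (p := a + 1) (q := b) (by linarith) hb hy
  have h1 : ∀ s : ℝ, s ^ (a + 1 - 1) = s ^ a := by intro s; norm_num
  simp_rw [h1] at h
  rw [h, show a + 1 + b - 1 = a + b by ring]
  ring

lemma beta_const_identity {a b : ℝ} (ha : 0 < a) (hb : 0 < b) :
    b * betaFn (a + 1) b = a * betaFn (b + 1) a := by
  unfold betaFn
  rw [Real.Gamma_add_one ha.ne', Real.Gamma_add_one hb.ne',
    show a + 1 + b = (a + b) + 1 by ring, show b + 1 + a = (a + b) + 1 by ring]
  field_simp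

lemma ii_pow_sub {b : ℝ} (hb : 0 < b) (x y : ℝ) :
    IntervalIntegrable (fun s => (y - s) ^ (b - 1)) volume x y := by
  have h := (intervalIntegrable_rpow' (a := y - x) (b := y - y)
    (r := b - 1) (by linarith)).comp_sub_left y
  simpa using h

lemma integral_pow_sub {b : ℝ} (hb : 0 < b) {x y : ℝ} (hxy : x ≤ y) :
    ∫ s in x..y, b * (y - s) ^ (b - 1) = (y - x) ^ b := by
  rw [intervalIntegral.integral_const_mul]
  have h1 : ∫ s in x..y, (y - s) ^ (b - 1) = ∫ u in (y - y)..(y - x), u ^ (b - 1) :=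
    intervalIntegral.integral_comp_sub_left (fun u => u ^ (b - 1)) y
  rw [h1, sub_self, integral_rpow (Or.inl (by linarith : (-1:ℝ) < b - 1)),
    show b - 1 + 1 = b by ring, Real.zero_rpow hb.ne', sub_zero, mul_div_cancel₀ _ hb.ne']

lemma measurable_g {b y : ℝ} : Measurable (fun s : ℝ => ENNReal.ofReal (b * (y - s) ^ (b - 1))) := by
  apply Measurable.ennreal_ofReal
  exact measurable_const.mul ((measurable_const.sub measurable_id).pow measurable_const)

lemma fubini_key (μ : Measure ℝ) [IsFiniteMeasure μ] {b y : ℝ} (hb : 0 < b) (hy : 0 < y) :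
    ∫⁻ x in Set.Icc 0 y, ENNReal.ofReal ((y - x) ^ b) ∂μ
      = ∫⁻ s in Set.Icc 0 y,
          ENNReal.ofReal (b * (y - s) ^ (b - 1)) * μ (Set.Iic s ∩ Set.Icc 0 y) := by
  set g : ℝ → ℝ≥0∞ := fun s => ENNReal.ofReal (b * (y - s) ^ (b - 1)) with hg
  have hgmeas : Measurable g := measurable_g
  have step1 : ∀ x ∈ Set.Icc (0:ℝ) y,
      ENNReal.ofReal ((y - x) ^ b) = ∫⁻ s in Set.Icc x y, g s := by
    intro x hx
    have hres : volume.restrict (Set.Icc x y) = volume.restrict (Set.Ioc x y) :=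
      (Measure.restrict_congr_set Ioc_ae_eq_Icc).symm
    rw [hres, hg, ← MeasureTheory.ofReal_integral_eq_lintegral_ofReal]
    · congr 1
      rw [← intervalIntegral.integral_of_le hx.2]
      exact (integral_pow_sub hb hx.2).symm
    · exact (intervalIntegrable_iff_integrableOn_Ioc_of_le hx.2).mp ((ii_pow_sub hb x y).const_mul b)
    · filter_upwards [ae_restrict_mem measurableSet_Ioc] with s hs
      have h1 : 0 ≤ y - s := by linarith [hs.2]
      have := Real.rpow_nonneg h1 (b - 1)
      positivity
  have step2 : ∀ x ∈ Set.Icc (0:ℝ) y,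
      (∫⁻ s in Set.Icc x y, g s) = ∫⁻ s in Set.Icc 0 y, (Set.Ici x).indicator g s := by
    intro x hx
    have hset : Set.Ici x ∩ Set.Icc 0 y = Set.Icc x y := by
      ext z
      simp only [Set.mem_inter_iff, Set.mem_Ici, Set.mem_Icc]
      constructor
      · rintro ⟨h1, _, h3⟩; exact ⟨h1, h3⟩
      · rintro ⟨h1, h2⟩; exact ⟨h1, le_trans hx.1 h1, h2⟩
    rw [lintegral_indicator measurableSet_Ici, Measure.restrict_restrict measurableSet_Ici, hset]
  calc ∫⁻ x in Set.Icc 0 y, ENNReal.ofReal ((y - x) ^ b) ∂μ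
      = ∫⁻ x in Set.Icc 0 y, (∫⁻ s in Set.Icc 0 y, (Set.Ici x).indicator g s) ∂μ := by
        refine setLIntegral_congr_fun measurableSet_Icc (fun x hx => ?_)
        rw [step1 x hx, step2 x hx]
    _ = ∫⁻ s in Set.Icc 0 y, (∫⁻ x in Set.Icc 0 y, (Set.Ici x).indicator g s ∂μ) := by
        apply lintegral_lintegral_swap
        have heq : (Function.uncurry fun x s => (Set.Ici x).indicator g s) =
            Set.indicator {p : ℝ × ℝ | p.1 ≤ p.2} (fun p => g p.2) := by
          ext p
          by_cases h : p.1 ≤ p.2 <;>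
            simp [Function.uncurry, Set.indicator, Set.mem_Ici, h]
        rw [heq]
        exact ((hgmeas.comp measurable_snd).indicator
          (measurableSet_le measurable_fst measurable_snd)).aemeasurable
    _ = ∫⁻ s in Set.Icc 0 y, g s * μ (Set.Iic s ∩ Set.Icc 0 y) := by
        refine setLIntegral_congr_fun measurableSet_Icc (fun s hs => ?_)
        have hpt : ∀ x : ℝ, (Set.Ici x).indicator g s = (Set.Iic s).indicator (fun _ => g s) x := by
          intro x
          by_cases h : x ≤ s <;> simp [Set.indicator, Set.mem_Ici, Set.mem_Iic, h]
        simp_rw [hpt]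
        rw [lintegral_indicator measurableSet_Iic, setLIntegral_const,
          Measure.restrict_apply measurableSet_Iic]

lemma weight_integral {a b c y : ℝ} (ha : 0 < a) (hb : 0 < b) (hc : 0 ≤ c) (hy : 0 < y) :
    ∫⁻ s in Set.Icc 0 y, ENNReal.ofReal (b * (y - s) ^ (b - 1)) * ENNReal.ofReal (c * s ^ a)
      = ENNReal.ofReal (c * b * betaFn (a + 1) b * y ^ (a + b)) := by
  have hcong : ∀ s ∈ Set.Icc (0:ℝ) y,
      ENNReal.ofReal (b * (y - s) ^ (b - 1)) * ENNReal.ofReal (c * s ^ a)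
        = ENNReal.ofReal ((c * b * s ^ a) * (y - s) ^ (b - 1)) := by
    intro s hs
    rw [← ENNReal.ofReal_mul (by
      have : (0:ℝ) ≤ y - s := by linarith [hs.2]
      have := Real.rpow_nonneg this (b - 1)
      positivity)]
    congr 1
    ring
  rw [setLIntegral_congr_fun measurableSet_Icc hcong,
    ← Measure.restrict_congr_set Ioc_ae_eq_Icc,
    ← MeasureTheory.ofReal_integral_eq_lintegral_ofReal]
  · congr 1
    rw [← intervalIntegral.integral_of_le hy.le]
    have hii : ∀ s : ℝ, (c * b * s ^ a) * (y - s) ^ (b - 1)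
        = (c * b) * (s ^ a * (y - s) ^ (b - 1)) := fun s => by ring
    simp_rw [hii]
    rw [intervalIntegral.integral_const_mul, beta_integral_value ha hb hy]
    ring
  · have h1 : IntervalIntegrable (fun s => (c * b * s ^ a) * (y - s) ^ (b - 1)) volume 0 y := by
      apply (ii_pow_sub hb 0 y).continuousOn_mul
      intro s hs
      have : ContinuousAt (fun s : ℝ => c * b * s ^ a) s := by
        exact (continuousAt_const).mul ((Real.continuousAt_rpow_const s a (Or.inr ha.le)))
      exact this.continuousWithinAt
    exact (intervalIntegrable_iff_integrableOn_Ioc_of_le hy.le).mp h1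
  · filter_upwards [ae_restrict_mem measurableSet_Ioc] with s hs
    have h1 : (0:ℝ) ≤ y - s := by linarith [hs.2]
    have h2 : (0:ℝ) ≤ s := le_of_lt hs.1
    have := Real.rpow_nonneg h1 (b - 1)
    have := Real.rpow_nonneg h2 a
    positivity

lemma measure_inter_eq (μ : Measure ℝ) (hμ0 : μ (Set.Iio 0) = 0) {s y : ℝ} (hsy : s ≤ y) :
    μ (Set.Iic s ∩ Set.Icc 0 y) = μ (Set.Iic s) := by
  refine le_antisymm (measure_mono Set.inter_subset_left) ?_
  calc μ (Set.Iic s) ≤ μ (Set.Iio 0 ∪ (Set.Iic s ∩ Set.Icc 0 y)) := by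
        apply measure_mono
        intro z hz
        rcases lt_or_ge z 0 with h | h
        · exact Or.inl h
        · exact Or.inr ⟨hz, h, le_trans hz hsy⟩
    _ ≤ μ (Set.Iio 0) + μ (Set.Iic s ∩ Set.Icc 0 y) := measure_union_le _ _
    _ = μ (Set.Iic s ∩ Set.Icc 0 y) := by rw [hμ0, zero_add]

lemma lintegral_restrict_supp (μ ν : Measure ℝ)
    (hμ0 : μ (Set.Iio 0) = 0) (hν0 : ν (Set.Iio 0) = 0) (y : ℝ) :
    ∫⁻ x, ν (Set.Iic (y - x)) ∂μ = ∫⁻ x in Set.Icc 0 y, ν (Set.Iic (y - x)) ∂μ := by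
  rw [← lintegral_indicator measurableSet_Icc]
  apply lintegral_congr_ae
  have hae : ∀ᵐ x ∂μ, 0 ≤ x := by
    rw [ae_iff]
    have : {x : ℝ | ¬ 0 ≤ x} = Set.Iio 0 := by ext x; simp [Set.mem_Iio, not_le]
    rw [this]; exact hμ0
  filter_upwards [hae] with x hx
  by_cases hxy : x ≤ y
  · rw [Set.indicator_of_mem (Set.mem_Icc.mpr ⟨hx, hxy⟩)]
  · rw [Set.indicator_of_notMem (fun hmem => hxy hmem.2)]
    have hsub : Set.Iic (y - x) ⊆ Set.Iio 0 := fun z hz => by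
      simp only [Set.mem_Iic] at hz
      simp only [Set.mem_Iio]
      linarith [not_le.mp hxy]
    exact le_antisymm (le_trans (measure_mono hsub) hν0.le) zero_le

lemma repr_lemma {Ω : Type*} [MeasurableSpace Ω] (P : Measure Ω) [IsProbabilityMeasure P]
    (X Z : Ω → ℝ) (hXmeas : Measurable X) (hZmeas : Measurable Z) (hindep : IndepFun X Z P)
    (y : ℝ) :
    P {ω | X ω + Z ω ≤ y} = ∫⁻ x, (P.map Z) (Set.Iic (y - x)) ∂(P.map X) := by
  have hmap := (ProbabilityTheory.indepFun_iff_map_prod_eq_prod_map_map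
    hXmeas.aemeasurable hZmeas.aemeasurable).mp hindep
  have hms : MeasurableSet {p : ℝ × ℝ | p.1 + p.2 ≤ y} :=
    measurableSet_le (measurable_fst.add measurable_snd) measurable_const
  have hset : {ω | X ω + Z ω ≤ y} = (fun ω => (X ω, Z ω)) ⁻¹' {p : ℝ × ℝ | p.1 + p.2 ≤ y} := rfl
  rw [hset, ← Measure.map_apply (hXmeas.prodMk hZmeas) hms, hmap, Measure.prod_apply hms]
  refine lintegral_congr fun x => ?_
  congr 1
  ext z
  simp only [Set.mem_preimage, Set.mem_setOf_eq, Set.mem_Iic]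
  constructor <;> intro h <;> linarith

lemma cdf_zero_at_zero (ν : Measure ℝ) [IsProbabilityMeasure ν] {B b : ℝ} (hB : 0 < B)
    (hb : 0 < b)
    (h : Tendsto (fun t => (ν (Set.Iic t)).toReal / (B * t ^ b)) (𝓝[>] 0) (𝓝 1)) :
    ν (Set.Iic 0) = 0 := by
  by_contra hne
  have hpos : 0 < (ν (Set.Iic 0)).toReal := ENNReal.toReal_pos hne (measure_ne_top ν _)
  have h2 : ∀ᶠ t in 𝓝[>] (0:ℝ), (ν (Set.Iic t)).toReal / (B * t ^ b) < 2 :=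
    h.eventually (gt_mem_nhds (by norm_num : (1:ℝ) < 2))
  have h3 : ∀ᶠ t in 𝓝[>] (0:ℝ), (ν (Set.Iic 0)).toReal ≤ 2 * (B * t ^ b) := by
    filter_upwards [h2, self_mem_nhdsWithin] with t ht ht0
    have ht0' : (0:ℝ) < t := ht0
    have htpos : 0 < B * t ^ b := by
      have := Real.rpow_pos_of_pos ht0' b
      positivity
    have hmono : (ν (Set.Iic 0)).toReal ≤ (ν (Set.Iic t)).toReal :=
      ENNReal.toReal_mono (measure_ne_top _ _) (measure_mono (Set.Iic_subset_Iic.2 ht0'.le))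
    have := (div_lt_iff₀ htpos).mp ht
    linarith
  have h4 : Tendsto (fun t : ℝ => 2 * (B * t ^ b)) (𝓝[>] 0) (𝓝 0) := by
    have hc : ContinuousAt (fun t : ℝ => t ^ b) 0 :=
      Real.continuousAt_rpow_const 0 b (Or.inr hb.le)
    have h5 : Tendsto (fun t : ℝ => t ^ b) (𝓝[>] (0:ℝ)) (𝓝 ((0:ℝ) ^ b)) :=
      hc.tendsto.mono_left nhdsWithin_le_nhds
    have := (h5.const_mul B).const_mul 2
    simpa [Real.zero_rpow hb.ne'] using this
  have := ge_of_tendsto h4 h3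
  linarith

lemma cdf_bounds (ν : Measure ℝ) [IsProbabilityMeasure ν] {B b : ℝ} (hB : 0 < B) (hb : 0 < b)
    (h : Tendsto (fun t => (ν (Set.Iic t)).toReal / (B * t ^ b)) (𝓝[>] 0) (𝓝 1))
    {ε : ℝ} (hε : 0 < ε) :
    ∃ δ > 0, ∀ t, 0 ≤ t → t < δ →
      ENNReal.ofReal ((1 - ε) * (B * t ^ b)) ≤ ν (Set.Iic t) ∧
      ν (Set.Iic t) ≤ ENNReal.ofReal ((1 + ε) * (B * t ^ b)) := by
  have hev : ∀ᶠ t in 𝓝[>] (0:ℝ), |(ν (Set.Iic t)).toReal / (B * t ^ b) - 1| < ε := by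
    have := Metric.tendsto_nhds.mp h ε hε
    simpa [Real.dist_eq] using this
  rw [eventually_nhdsWithin_iff] at hev
  rcases Metric.eventually_nhds_iff.mp hev with ⟨δ, hδ, hδ'⟩
  refine ⟨δ, hδ, fun t ht0 htδ => ?_⟩
  rcases eq_or_lt_of_le ht0 with h0 | htpos
  · have hz := cdf_zero_at_zero ν hB hb h
    rw [← h0, hz]
    constructor
    · rw [Real.zero_rpow hb.ne']
      simp
    · exact zero_le
  · have hdist : dist t 0 < δ := by
      rw [Real.dist_eq, sub_zero, abs_of_pos htpos]; exact htδ
    have hr := hδ' hdist htpos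
    have hD : 0 < B * t ^ b := by
      have := Real.rpow_pos_of_pos htpos b
      positivity
    have habs := abs_lt.mp hr
    have hub : (ν (Set.Iic t)).toReal ≤ (1 + ε) * (B * t ^ b) := by
      have := (div_lt_iff₀ hD).mp (by linarith [habs.2] :
        (ν (Set.Iic t)).toReal / (B * t ^ b) < 1 + ε)
      linarith
    have hlb : (1 - ε) * (B * t ^ b) ≤ (ν (Set.Iic t)).toReal := by
      have := (lt_div_iff₀ hD).mp (by linarith [habs.1] :
        (1 - ε) < (ν (Set.Iic t)).toReal / (B * t ^ b))
      linarith
    constructor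
    · exact ENNReal.ofReal_le_of_le_toReal hlb
    · calc ν (Set.Iic t) = ENNReal.ofReal ((ν (Set.Iic t)).toReal) :=
            (ENNReal.ofReal_toReal (measure_ne_top _ _)).symm
        _ ≤ _ := ENNReal.ofReal_le_ofReal hub

theorem stmt_8 {Ω : Type*} [MeasurableSpace Ω] (P : Measure Ω) [IsProbabilityMeasure P]
    (X Z : Ω → ℝ) (hXmeas : Measurable X) (hZmeas : Measurable Z)
    (hX0 : ∀ ω, 0 ≤ X ω) (hZ0 : ∀ ω, 0 ≤ Z ω)
    (hindep : IndepFun X Z P)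
    (A B a b : ℝ) (hA : 0 < A) (hB : 0 < B) (ha : 0 < a) (hb : 0 < b)
    (hFX : Tendsto (fun x : ℝ => (P {ω | X ω ≤ x}).toReal / (A * x ^ a)) (𝓝[>] 0) (𝓝 1))
    (hFZ : Tendsto (fun z : ℝ => (P {ω | Z ω ≤ z}).toReal / (B * z ^ b)) (𝓝[>] 0) (𝓝 1)) :
    Tendsto (fun y : ℝ =>
        (P {ω | X ω + Z ω ≤ y}).toReal / (A * B * a * betaFn (b + 1) a * y ^ (a + b)))
      (𝓝[>] 0) (𝓝 1) := by
  set μ := P.map X with hμdef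
  set ν := P.map Z with hνdef
  haveI : IsProbabilityMeasure μ := Measure.isProbabilityMeasure_map hXmeas.aemeasurable
  haveI : IsProbabilityMeasure ν := Measure.isProbabilityMeasure_map hZmeas.aemeasurable
  have hμIic : ∀ x : ℝ, μ (Set.Iic x) = P {ω | X ω ≤ x} := fun x => by
    rw [hμdef, Measure.map_apply hXmeas measurableSet_Iic]; rfl
  have hνIic : ∀ x : ℝ, ν (Set.Iic x) = P {ω | Z ω ≤ x} := fun x => by
    rw [hνdef, Measure.map_apply hZmeas measurableSet_Iic]; rfl
  have hμ0 : μ (Set.Iio 0) = 0 := by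
    rw [hμdef, Measure.map_apply hXmeas measurableSet_Iio]
    have he : X ⁻¹' Set.Iio 0 = ∅ :=
      Set.eq_empty_of_forall_notMem fun ω h => absurd (hX0 ω) (by simpa using h)
    rw [he, measure_empty]
  have hν0 : ν (Set.Iio 0) = 0 := by
    rw [hνdef, Measure.map_apply hZmeas measurableSet_Iio]
    have he : Z ⁻¹' Set.Iio 0 = ∅ :=
      Set.eq_empty_of_forall_notMem fun ω h => absurd (hZ0 ω) (by simpa using h)
    rw [he, measure_empty]
  have hFX' : Tendsto (fun t : ℝ => (μ (Set.Iic t)).toReal / (A * t ^ a)) (𝓝[>] 0) (𝓝 1) := by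
    simp_rw [hμIic]; exact hFX
  have hFZ' : Tendsto (fun t : ℝ => (ν (Set.Iic t)).toReal / (B * t ^ b)) (𝓝[>] 0) (𝓝 1) := by
    simp_rw [hνIic]; exact hFZ
  have key : ∀ ε : ℝ, 0 < ε → ε < 1 → ∃ δ > 0, ∀ y : ℝ, 0 < y → y < δ →
      ENNReal.ofReal ((1 - ε)^2 * (A * B * a * betaFn (b + 1) a * y ^ (a + b)))
          ≤ P {ω | X ω + Z ω ≤ y} ∧
      P {ω | X ω + Z ω ≤ y}
          ≤ ENNReal.ofReal ((1 + ε)^2 * (A * B * a * betaFn (b + 1) a * y ^ (a + b))) := by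
    intro ε hε hε1
    obtain ⟨δ₁, hδ₁, hXb⟩ := cdf_bounds μ hA ha hFX' hε
    obtain ⟨δ₂, hδ₂, hZb⟩ := cdf_bounds ν hB hb hFZ' hε
    refine ⟨min δ₁ δ₂, lt_min hδ₁ hδ₂, fun y hy hyδ => ?_⟩
    have hyδ₁ : y < δ₁ := lt_of_lt_of_le hyδ (min_le_left _ _)
    have hyδ₂ : y < δ₂ := lt_of_lt_of_le hyδ (min_le_right _ _)
    have hrepr : P {ω | X ω + Z ω ≤ y} = ∫⁻ x in Set.Icc 0 y, ν (Set.Iic (y - x)) ∂μ := by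
      rw [repr_lemma P X Z hXmeas hZmeas hindep y, ← hμdef, ← hνdef,
        lintegral_restrict_supp μ ν hμ0 hν0 y]
    have hid := beta_const_identity ha hb
    constructor
    · rw [hrepr]
      calc ENNReal.ofReal ((1-ε)^2 * (A * B * a * betaFn (b+1) a * y^(a+b)))
          = ENNReal.ofReal ((1-ε)*B) *
              ENNReal.ofReal (((1-ε)*A) * b * betaFn (a+1) b * y^(a+b)) := by
            rw [← ENNReal.ofReal_mul (by nlinarith)]
            congr 1
            linear_combination (-(1-ε)^2 * A * B * y^(a+b)) * hid
        _ = ENNReal.ofReal ((1-ε)*B) * ∫⁻ s in Set.Icc 0 y,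
              ENNReal.ofReal (b*(y-s)^(b-1)) * ENNReal.ofReal (((1-ε)*A) * s^a) := by
            rw [weight_integral ha hb (by nlinarith) hy]
        _ ≤ ENNReal.ofReal ((1-ε)*B) * ∫⁻ s in Set.Icc 0 y,
              ENNReal.ofReal (b*(y-s)^(b-1)) * μ (Set.Iic s ∩ Set.Icc 0 y) := by
            apply mul_le_mul_right
            apply lintegral_mono_ae
            filter_upwards [ae_restrict_mem measurableSet_Icc] with s hs
            apply mul_le_mul_right
            rw [measure_inter_eq μ hμ0 hs.2]
            refine le_trans (le_of_eq ?_) (hXb s hs.1 (lt_of_le_of_lt hs.2 hyδ₁)).1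
            congr 1; ring
        _ = ENNReal.ofReal ((1-ε)*B) * ∫⁻ x in Set.Icc 0 y, ENNReal.ofReal ((y-x)^b) ∂μ := by
            rw [fubini_key μ hb hy]
        _ = ∫⁻ x in Set.Icc 0 y, ENNReal.ofReal ((1-ε)*B) * ENNReal.ofReal ((y-x)^b) ∂μ :=
            (lintegral_const_mul' _ _ ENNReal.ofReal_ne_top).symm
        _ ≤ ∫⁻ x in Set.Icc 0 y, ν (Set.Iic (y-x)) ∂μ := by
            apply lintegral_mono_ae
            filter_upwards [ae_restrict_mem measurableSet_Icc] with x hx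
            have h1 : (0:ℝ) ≤ y - x := by linarith [hx.2]
            have h2 : y - x < δ₂ := lt_of_le_of_lt (by linarith [hx.1]) hyδ₂
            refine le_trans (le_of_eq ?_) (hZb (y-x) h1 h2).1
            rw [← ENNReal.ofReal_mul (by nlinarith)]
            congr 1; ring
    · rw [hrepr]
      calc ∫⁻ x in Set.Icc 0 y, ν (Set.Iic (y-x)) ∂μ
          ≤ ∫⁻ x in Set.Icc 0 y, ENNReal.ofReal ((1+ε)*B) * ENNReal.ofReal ((y-x)^b) ∂μ := by
            apply lintegral_mono_ae
            filter_upwards [ae_restrict_mem measurableSet_Icc] with x hx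
            have h1 : (0:ℝ) ≤ y - x := by linarith [hx.2]
            have h2 : y - x < δ₂ := lt_of_le_of_lt (by linarith [hx.1]) hyδ₂
            refine le_trans (hZb (y-x) h1 h2).2 (le_of_eq ?_)
            rw [← ENNReal.ofReal_mul (by nlinarith)]
            congr 1; ring
        _ = ENNReal.ofReal ((1+ε)*B) * ∫⁻ x in Set.Icc 0 y, ENNReal.ofReal ((y-x)^b) ∂μ :=
            lintegral_const_mul' _ _ ENNReal.ofReal_ne_top
        _ = ENNReal.ofReal ((1+ε)*B) * ∫⁻ s in Set.Icc 0 y,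
              ENNReal.ofReal (b*(y-s)^(b-1)) * μ (Set.Iic s ∩ Set.Icc 0 y) := by
            rw [fubini_key μ hb hy]
        _ ≤ ENNReal.ofReal ((1+ε)*B) * ∫⁻ s in Set.Icc 0 y,
              ENNReal.ofReal (b*(y-s)^(b-1)) * ENNReal.ofReal (((1+ε)*A) * s^a) := by
            apply mul_le_mul_right
            apply lintegral_mono_ae
            filter_upwards [ae_restrict_mem measurableSet_Icc] with s hs
            apply mul_le_mul_right
            rw [measure_inter_eq μ hμ0 hs.2]
            refine le_trans (hXb s hs.1 (lt_of_le_of_lt hs.2 hyδ₁)).2 (le_of_eq ?_)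
            congr 1; ring
        _ = ENNReal.ofReal ((1+ε)^2 * (A * B * a * betaFn (b+1) a * y^(a+b))) := by
            rw [weight_integral ha hb (by nlinarith) hy,
              ← ENNReal.ofReal_mul (by nlinarith)]
            congr 1
            linear_combination ((1+ε)^2 * A * B * y^(a+b)) * hid
  rw [Metric.tendsto_nhds]
  intro ε hε
  set ε' := min (ε/4) (1/2) with hε'def
  have hε'0 : 0 < ε' := lt_min (by linarith) one_half_pos
  have hε'1 : ε' < 1 := lt_of_le_of_lt (min_le_right _ _) (by norm_num)
  have hε'a : ε' ≤ ε/4 := min_le_left _ _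
  have hε'b : ε' ≤ 1/2 := min_le_right _ _
  obtain ⟨δ, hδ0, hkey⟩ := key ε' hε'0 hε'1
  filter_upwards [Ioo_mem_nhdsGT hδ0] with y hy
  obtain ⟨hlb, hub⟩ := hkey y hy.1 hy.2
  set T := (P {ω | X ω + Z ω ≤ y}).toReal with hT
  set D := A * B * a * betaFn (b + 1) a * y ^ (a + b) with hD
  have hDpos : 0 < D := by
    have h1 := betaFn_pos (by linarith : (0:ℝ) < b+1) ha
    have h2 := Real.rpow_pos_of_pos hy.1 (a+b)
    rw [hD]; positivity
  have hTub : T ≤ (1+ε')^2 * D :=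
    ENNReal.toReal_le_of_le_ofReal (by nlinarith) hub
  have hTlb : (1-ε')^2 * D ≤ T :=
    (ENNReal.ofReal_le_iff_le_toReal (measure_ne_top P _)).mp hlb
  show dist (T / D) 1 < ε
  rw [Real.dist_eq, abs_lt]
  have hrub : T / D ≤ (1+ε')^2 := by rw [div_le_iff₀ hDpos]; nlinarith
  have hrlb : (1-ε')^2 ≤ T / D := by rw [le_div_iff₀ hDpos]; nlinarith
  constructor <;> nlinarith
end

section
/- With the decomposition |h^H f|² = Z_Σ + Z₀, where Z_Σ has CDF asymptotic to (2^M/π^{M/2})(1+d^α)^{M/2} z^{M/2}/M! and Z₀ has CDF asymptotic to 2(1+d^α)^{1/2} z^{1/2}/(M^{1/2}√π) as z → 0⁺, and Z_Σ, Z₀ independent, the CDF of |h^H f|² satisfies F(y) = [2^M (1+d^α)^{(M+1)/2} Beta(3/2, M/2) / (π^{M/2} (M−1)! M^{1/2} Γ(1/2))] · y^{(M+1)/2} · (1+o(1)) as y → 0⁺. -/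
open MeasureTheory ProbabilityTheory Real Filter Topology

section Aux
open Set intervalIntegral

lemma beta_val {u v y : ℝ} (hu : 0 < u) (hv : 0 < v) (hy : 0 < y) :
    ∫ t in (0:ℝ)..y, t ^ (u - 1) * (y - t) ^ (v - 1)
      = y ^ (u + v - 1) * (Real.Gamma u * Real.Gamma v / Real.Gamma (u + v)) := by
  have hG : Real.Gamma (u + v) ≠ 0 := (Real.Gamma_pos_of_pos (by linarith)).ne'
  have hbeta : Complex.betaIntegral u v
      = ((Real.Gamma u * Real.Gamma v / Real.Gamma (u + v) : ℝ) : ℂ) := by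
    have h := Complex.Gamma_mul_Gamma_eq_betaIntegral
      (s := (u : ℂ)) (t := (v : ℂ)) (by rwa [Complex.ofReal_re]) (by rwa [Complex.ofReal_re])
    rw [← Complex.ofReal_add, Complex.Gamma_ofReal, Complex.Gamma_ofReal,
      Complex.Gamma_ofReal] at h
    rw [eq_comm, Complex.ofReal_div, Complex.ofReal_mul,
      div_eq_iff (show (Real.Gamma (u+v) : ℂ) ≠ 0 by exact_mod_cast hG), h]
    ring
  have hscaled := Complex.betaIntegral_scaled (u : ℂ) (v : ℂ) hy
  have hcongr : ∫ x in (0:ℝ)..y, ((x : ℂ) ^ ((u : ℂ) - 1) * ((y : ℂ) - x) ^ ((v : ℂ) - 1))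
      = ((∫ t in (0:ℝ)..y, t ^ (u - 1) * (y - t) ^ (v - 1) : ℝ) : ℂ) := by
    rw [← intervalIntegral.integral_ofReal]
    refine intervalIntegral.integral_congr fun x hx => ?_
    rw [Set.uIcc_of_le hy.le] at hx
    rw [Complex.ofReal_mul, Complex.ofReal_cpow hx.1, Complex.ofReal_cpow (by linarith [hx.2])]
    push_cast
    ring
  rw [hcongr, hbeta,
    show ((u:ℂ) + v - 1) = ((u + v - 1 : ℝ) : ℂ) by push_cast; ring,
    ← Complex.ofReal_cpow hy.le, ← Complex.ofReal_mul] at hscaled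
  exact_mod_cast hscaled


lemma rpow_le_max {x c d : ℝ} (s : ℝ) (hc : 0 < c) (hcx : c ≤ x) (hxd : x ≤ d) :
    x ^ s ≤ max (c ^ s) (d ^ s) := by
  rcases le_or_gt 0 s with h | h
  · exact le_max_of_le_right (rpow_le_rpow (by linarith) hxd h)
  · exact le_max_of_le_left (rpow_le_rpow_of_nonpos hc hcx h.le)

lemma beta_intble {u v y : ℝ} (hu : 0 < u) (hv : 0 < v) (hy : 0 < y) :
    IntegrableOn (fun t => t ^ (u - 1) * (y - t) ^ (v - 1)) (Ioc 0 y) := by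
  have hmeas : Measurable (fun t : ℝ => t ^ (u - 1) * (y - t) ^ (v - 1)) := by
    fun_prop
  have hhalf : 0 < y / 2 := by linarith
  have h1 : IntegrableOn (fun t => t ^ (u - 1) * (y - t) ^ (v - 1)) (Ioc 0 (y/2)) := by
    have hg : IntegrableOn (fun t : ℝ => t ^ (u - 1) * max ((y/2) ^ (v-1)) (y ^ (v-1)))
        (Ioc 0 (y/2)) := by
      exact ((intervalIntegrable_iff_integrableOn_Ioc_of_le hhalf.le).mp
        (intervalIntegral.intervalIntegrable_rpow' (by linarith))).mul_const _
    refine Integrable.mono' hg (hmeas.aestronglyMeasurable.restrict) ?_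
    rw [ae_restrict_iff' measurableSet_Ioc]
    refine ae_of_all _ fun t ht => ?_
    have ht1 : 0 < t := ht.1
    have ht2 : t ≤ y / 2 := ht.2
    rw [Real.norm_eq_abs,
      abs_of_nonneg (mul_nonneg (rpow_nonneg ht1.le _) (rpow_nonneg (by linarith) _))]
    exact mul_le_mul_of_nonneg_left
      (rpow_le_max (v-1) hhalf (by linarith) (by linarith)) (rpow_nonneg ht1.le _)
  have h2 : IntegrableOn (fun t => t ^ (u - 1) * (y - t) ^ (v - 1)) (Ioc (y/2) y) := by
    have hg : IntegrableOn
        (fun t : ℝ => max ((y/2) ^ (u-1)) (y ^ (u-1)) * (y - t) ^ (v-1)) (Ioc (y/2) y) := by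
      refine Integrable.const_mul ?_ _
      have hbase : IntervalIntegrable (fun x : ℝ => x ^ (v - 1)) volume 0 (y/2) :=
        intervalIntegral.intervalIntegrable_rpow' (by linarith)
      have := (hbase.comp_sub_left y).symm
      rw [sub_zero] at this
      exact (intervalIntegrable_iff_integrableOn_Ioc_of_le (by linarith)).mp
        (by rw [show y - y/2 = y/2 by ring] at this; simpa using this)
    refine Integrable.mono' hg (hmeas.aestronglyMeasurable.restrict) ?_
    rw [ae_restrict_iff' measurableSet_Ioc]
    refine ae_of_all _ fun t ht => ?_
    have ht0 : (0:ℝ) < t := lt_trans hhalf ht.1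
    rw [Real.norm_eq_abs,
      abs_of_nonneg (mul_nonneg (rpow_nonneg ht0.le _) (rpow_nonneg (by linarith [ht.2]) _))]
    exact mul_le_mul_of_nonneg_right
      (rpow_le_max (u-1) hhalf ht.1.le ht.2) (rpow_nonneg (by linarith [ht.2]) _)
  have := h1.union h2
  rwa [Set.Ioc_union_Ioc_eq_Ioc hhalf.le (by linarith)] at this

lemma beta_lintegral {u v y : ℝ} (hu : 0 < u) (hv : 0 < v) (hy : 0 < y) :
    ∫⁻ t in Ioo 0 y, ENNReal.ofReal (t ^ (u - 1) * (y - t) ^ (v - 1))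
      = ENNReal.ofReal (y ^ (u + v - 1) * (Real.Gamma u * Real.Gamma v / Real.Gamma (u + v))) := by
  rw [← beta_val hu hv hy, intervalIntegral.integral_of_le hy.le,
    integral_Ioc_eq_integral_Ioo]
  refine (ofReal_integral_eq_lintegral_ofReal
    ((beta_intble hu hv hy).mono_set Set.Ioo_subset_Ioc_self) ?_).symm
  rw [EventuallyLE, ae_restrict_iff' measurableSet_Ioo]
  exact ae_of_all _ fun t ht =>
    mul_nonneg (rpow_nonneg ht.1.le _) (rpow_nonneg (by linarith [ht.2]) _)

lemma sandwich {F : ℝ → ℝ} {A s : ℝ} (hA : 0 < A)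
    (h : Tendsto (fun z => F z / (A * z ^ s)) (𝓝[>] (0:ℝ)) (𝓝 1)) {ε : ℝ} (hε : 0 < ε) :
    ∃ δ > 0, ∀ z ∈ Ioo (0:ℝ) δ,
      (1 - ε) * (A * z ^ s) ≤ F z ∧ F z ≤ (1 + ε) * (A * z ^ s) := by
  have h2 := Metric.tendsto_nhds.mp h ε hε
  rw [eventually_nhdsWithin_iff] at h2
  rcases Metric.eventually_nhds_iff.mp h2 with ⟨δ, hδ, hball⟩
  refine ⟨δ, hδ, fun z hz => ?_⟩
  have hzpos := hz.1
  have h1 : dist (F z / (A * z ^ s)) 1 < ε := by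
    refine hball ?_ hzpos
    rw [Real.dist_eq, sub_zero, abs_of_pos hzpos]; exact hz.2
  have hden : 0 < A * z ^ s := mul_pos hA (rpow_pos_of_pos hzpos _)
  rw [Real.dist_eq, abs_lt] at h1
  constructor
  · have hl : (1 - ε) < F z / (A * z ^ s) := by linarith [h1.1]
    exact ((lt_div_iff₀ hden).mp hl).le
  · have hu : F z / (A * z ^ s) < 1 + ε := by linarith [h1.2]
    exact ((div_lt_iff₀ hden).mp hu).le

lemma F_zero {F : ℝ → ℝ} {A s : ℝ} (hA : 0 < A) (hs : 0 < s)
    (h : Tendsto (fun z => F z / (A * z ^ s)) (𝓝[>] (0:ℝ)) (𝓝 1))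
    (hmono : ∀ z, 0 < z → F 0 ≤ F z) (h0 : 0 ≤ F 0) : F 0 = 0 := by
  have hden : Tendsto (fun z : ℝ => A * z ^ s) (𝓝[>] (0:ℝ)) (𝓝 0) := by
    have hc : ContinuousAt (fun x : ℝ => x ^ s) 0 :=
      Real.continuousAt_rpow_const 0 s (Or.inr hs.le)
    have h1 : Tendsto (fun x : ℝ => x ^ s) (𝓝[>] (0:ℝ)) (𝓝 ((0:ℝ) ^ s)) :=
      (hc.tendsto).mono_left nhdsWithin_le_nhds
    have := h1.const_mul A
    rwa [Real.zero_rpow hs.ne', mul_zero] at this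
  have hF : Tendsto F (𝓝[>] (0:ℝ)) (𝓝 0) := by
    have := h.mul hden
    rw [one_mul] at this
    refine this.congr' ?_
    filter_upwards [self_mem_nhdsWithin] with z hz
    have hdz : A * z ^ s ≠ 0 := (mul_pos hA (rpow_pos_of_pos hz _)).ne'
    exact div_mul_cancel₀ _ hdz
  have hle : F 0 ≤ 0 := by
    refine ge_of_tendsto hF ?_
    filter_upwards [self_mem_nhdsWithin] with z hz using hmono z hz
  linarith

lemma beta_lintegral' {p q y : ℝ} (hp : 0 < p) (hq : 0 < q) (hy : 0 < y) :
    ∫⁻ t in Ioo 0 y, ENNReal.ofReal (t ^ (q - 1) * (y - t) ^ p)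
      = ENNReal.ofReal (y ^ (p + q)
          * (Real.Gamma q * Real.Gamma (p + 1) / Real.Gamma (q + (p + 1)))) := by
  have h := beta_lintegral (v := p + 1) hq (by linarith) hy
  rw [show p + 1 - 1 = p by ring, show q + (p+1) - 1 = p + q by ring] at h
  exact h

lemma main_est {μ ν : Measure ℝ} [IsProbabilityMeasure μ] [IsProbabilityMeasure ν]
    {p q aS b0 : ℝ} (hp : 0 < p) (hq : 0 < q) (haS : 0 < aS) (hb : 0 < b0)
    (hμneg : μ (Iio 0) = 0) (hνneg : ν (Iio 0) = 0) (hν0 : ν (Iic 0) = 0)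
    {ε : ℝ} (hε : 0 < ε) (hε1 : ε < 1) {δ : ℝ}
    (hμb : ∀ z ∈ Ioo (0:ℝ) δ, ENNReal.ofReal ((1-ε)*(aS*z^p)) ≤ μ (Iic z)
        ∧ μ (Iic z) ≤ ENNReal.ofReal ((1+ε)*(aS*z^p)))
    (hνb : ∀ z ∈ Ioo (0:ℝ) δ, ENNReal.ofReal ((1-ε)*(b0*z^q)) ≤ ν (Iic z)
        ∧ ν (Iic z) ≤ ENNReal.ofReal ((1+ε)*(b0*z^q)))
    {y : ℝ} (hy : 0 < y) (hyδ : y < δ) :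
    ENNReal.ofReal ((1-ε)^2 * (aS * b0 * (q * (Real.Gamma q * Real.Gamma (p+1)
          / Real.Gamma (q+(p+1)))) * y^(p+q)))
      ≤ ∫⁻ x, ν (Iic (y - x)) ∂μ ∧
    ∫⁻ x, ν (Iic (y - x)) ∂μ
      ≤ ENNReal.ofReal ((1+ε)^2 * (aS * b0 * (q * (Real.Gamma q * Real.Gamma (p+1)
          / Real.Gamma (q+(p+1)))) * y^(p+q))) := by
  -- Step 1: reduce to Icc 0 y
  have hT : ∫⁻ x, ν (Iic (y - x)) ∂μ = ∫⁻ x in Icc 0 y, ν (Iic (y - x)) ∂μ := by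
    rw [← lintegral_add_compl (fun x => ν (Iic (y - x))) (measurableSet_Iio (a := (0:ℝ)))]
    rw [setLIntegral_measure_zero _ _ hμneg, zero_add, compl_Iio,
      ← Set.Icc_union_Ioi_eq_Ici hy.le,
      lintegral_union measurableSet_Ioi (by
        rw [Set.disjoint_left]; intro x hx hx2; exact absurd hx.2 (not_le.mpr hx2))]
    have hzero : ∫⁻ x in Ioi y, ν (Iic (y - x)) ∂μ = 0 := by
      rw [setLIntegral_congr_fun_ae measurableSet_Ioi
        (ae_of_all _ (fun x (hx : x ∈ Ioi y) => ?_)), lintegral_zero]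
      refine le_antisymm (le_trans (measure_mono fun t ht => ?_) hνneg.le) zero_le
      · have hxy : y < x := hx
        have : (y - x : ℝ) < 0 := by linarith
        exact lt_of_le_of_lt (mem_Iic.mp ht) this
    rw [hzero, add_zero]
  -- Step 3: layer cake for the inner integral
  have f_nn : 0 ≤ᵐ[μ.restrict (Icc 0 y)] fun x => y - x := by
    rw [EventuallyLE, ae_restrict_iff' measurableSet_Icc]
    exact ae_of_all _ fun x hx => sub_nonneg.mpr hx.2
  have hlayer := lintegral_rpow_eq_lintegral_meas_lt_mul (μ.restrict (Icc 0 y))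
    f_nn ((measurable_const.sub measurable_id).aemeasurable) hq
  -- Step 3b: identify the tail-measure integral
  have hK : ∫⁻ t in Ioi 0, (μ.restrict (Icc 0 y)) {a : ℝ | t < y - a}
        * ENNReal.ofReal (t ^ (q - 1))
      = ∫⁻ t in Ioo 0 y, μ (Iic (y - t)) * ENNReal.ofReal (t ^ (q - 1)) := by
    have hset : ∀ t : ℝ, {a : ℝ | t < y - a} = Iio (y - t) := by
      intro t; ext a; simp only [mem_setOf_eq, mem_Iio]; constructor <;> intro <;> linarith
    rw [← Set.Ioo_union_Ici_eq_Ioi hy,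
      lintegral_union measurableSet_Ici (by
        rw [Set.disjoint_left]; intro x hx hx2; exact absurd (mem_Ici.mp hx2) (not_le.mpr hx.2))]
    have hz2 : ∫⁻ t in Ici y, (μ.restrict (Icc 0 y)) {a : ℝ | t < y - a}
        * ENNReal.ofReal (t ^ (q - 1)) = 0 := by
      rw [setLIntegral_congr_fun_ae measurableSet_Ici
        (ae_of_all _ (fun t (ht : t ∈ Ici y) => ?_)), lintegral_zero]
      rw [hset t, Measure.restrict_apply measurableSet_Iio]
      have : Iio (y - t) ∩ Icc 0 y = ∅ := by
        ext x; simp only [mem_inter_iff, mem_Iio, mem_Icc, mem_empty_iff_false, iff_false]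
        rintro ⟨h1, h2, h3⟩
        have : y - t ≤ 0 := by linarith [mem_Ici.mp ht]
        linarith
      rw [this, measure_empty, zero_mul]
    rw [hz2, add_zero]
    -- now switch to Iic a.e.
    have hcount : {z : ℝ | μ (Iic z) ≠ μ (Iio z)}.Countable := by
      have h1 := MeasureTheory.countable_meas_le_ne_meas_lt μ (fun a : ℝ => -a)
      have h2 : {z : ℝ | μ (Iic z) ≠ μ (Iio z)}
          ⊆ (fun t : ℝ => -t) '' {t : ℝ | μ {a : ℝ | t ≤ -a} ≠ μ {a : ℝ | t < -a}} := by
        intro z hz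
        refine ⟨-z, ?_, neg_neg z⟩
        simp only [mem_setOf_eq] at hz ⊢
        have e1 : {a : ℝ | -z ≤ -a} = Iic z := by ext a; simp
        have e2 : {a : ℝ | -z < -a} = Iio z := by ext a; simp
        rw [e1, e2]; exact hz
      exact (h1.image _).mono h2
    have hnull : (volume : Measure ℝ) {t : ℝ | μ (Iic (y - t)) ≠ μ (Iio (y - t))} = 0 := by
      have h3 : {t : ℝ | μ (Iic (y - t)) ≠ μ (Iio (y - t))}
          ⊆ (fun z : ℝ => y - z) '' {z : ℝ | μ (Iic z) ≠ μ (Iio z)} := by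
        intro t ht
        exact ⟨y - t, ht, by ring⟩
      exact measure_mono_null h3 ((hcount.image _).measure_zero _)
    have hae : ∀ᵐ t ∂(volume : Measure ℝ), t ∈ Ioo 0 y →
        (μ.restrict (Icc 0 y)) {a : ℝ | t < y - a} * ENNReal.ofReal (t ^ (q - 1))
          = μ (Iic (y - t)) * ENNReal.ofReal (t ^ (q - 1)) := by
      filter_upwards [measure_eq_zero_iff_ae_notMem.mp hnull] with t ht hmem
      have heq : μ (Iio (y - t)) = μ (Iic (y - t)) := by
        by_contra hne
        exact ht (Ne.symm hne)
      rw [hset t, Measure.restrict_apply measurableSet_Iio]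
      have e3 : Iio (y - t) ∩ Icc 0 y = Ico 0 (y - t) := by
        ext x
        simp only [mem_inter_iff, mem_Iio, mem_Icc, mem_Ico]
        constructor
        · rintro ⟨h1, h2, h3⟩; exact ⟨h2, h1⟩
        · rintro ⟨h1, h2⟩; exact ⟨h2, h1, by nlinarith [hmem.1, hmem.2]⟩
      rw [e3]
      have e4 : μ (Ico 0 (y - t)) = μ (Iio (y - t)) := by
        refine le_antisymm (measure_mono fun x hx => hx.2) ?_
        calc μ (Iio (y - t)) ≤ μ (Iio 0 ∪ Ico 0 (y - t)) := by
              refine measure_mono fun x hx => ?_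
              rcases lt_or_ge x 0 with h | h
              · exact Or.inl h
              · exact Or.inr ⟨h, hx⟩
          _ ≤ μ (Iio 0) + μ (Ico 0 (y - t)) := measure_union_le _ _
          _ = μ (Ico 0 (y - t)) := by rw [hμneg, zero_add]
      rw [e4, heq]
    exact setLIntegral_congr_fun_ae measurableSet_Ioo hae
  set B : ℝ := Real.Gamma q * Real.Gamma (p+1) / Real.Gamma (q+(p+1)) with hB
  have hBpos : 0 < B := by
    apply div_pos (mul_pos (Real.Gamma_pos_of_pos hq) (Real.Gamma_pos_of_pos (by linarith)))
      (Real.Gamma_pos_of_pos (by linarith))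
  have hyp : ∀ t ∈ Ioo (0:ℝ) y, y - t ∈ Ioo (0:ℝ) δ := fun t ht =>
    ⟨by linarith [ht.2], by linarith [ht.1]⟩
  -- upper bound
  have hup : ∫⁻ x, ν (Iic (y - x)) ∂μ
      ≤ ENNReal.ofReal ((1+ε)^2 * (aS * b0 * (q * B) * y^(p+q))) := by
    calc ∫⁻ x, ν (Iic (y - x)) ∂μ = ∫⁻ x in Icc 0 y, ν (Iic (y - x)) ∂μ := hT
      _ ≤ ∫⁻ x in Icc 0 y, ENNReal.ofReal ((1+ε)*b0) * ENNReal.ofReal ((y - x)^q) ∂μ := by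
          refine setLIntegral_mono' measurableSet_Icc fun x hx => ?_
          rw [← ENNReal.ofReal_mul (by positivity)]
          rcases hx.2.eq_or_lt with h | h
          · have hyx : y - x = 0 := by rw [h]; ring
            rw [hyx, hν0]
            exact zero_le
          · refine le_trans (hνb (y - x) ⟨by linarith, by linarith [hx.1]⟩).2 (le_of_eq ?_)
            congr 1; ring
      _ = ENNReal.ofReal ((1+ε)*b0) * ∫⁻ x in Icc 0 y, ENNReal.ofReal ((y - x)^q) ∂μ :=
          lintegral_const_mul' _ _ ENNReal.ofReal_ne_top
      _ = ENNReal.ofReal ((1+ε)*b0) * (ENNReal.ofReal q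
            * ∫⁻ t in Ioo 0 y, μ (Iic (y - t)) * ENNReal.ofReal (t ^ (q - 1))) := by
          rw [hlayer, hK]
      _ ≤ ENNReal.ofReal ((1+ε)*b0) * (ENNReal.ofReal q
            * ∫⁻ t in Ioo 0 y, ENNReal.ofReal ((1+ε)*aS)
                * ENNReal.ofReal (t^(q-1) * (y - t)^p) ∂volume) := by
          refine mul_le_mul_right (mul_le_mul_right ?_ _) _
          refine setLIntegral_mono' measurableSet_Ioo fun t ht => ?_
          calc μ (Iic (y - t)) * ENNReal.ofReal (t ^ (q - 1))
              ≤ ENNReal.ofReal ((1+ε)*(aS*(y-t)^p)) * ENNReal.ofReal (t ^ (q - 1)) :=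
                mul_le_mul_left (hμb (y - t) (hyp t ht)).2 _
            _ = ENNReal.ofReal ((1+ε)*aS) * ENNReal.ofReal (t^(q-1) * (y - t)^p) := by
                rw [← ENNReal.ofReal_mul (mul_nonneg (by linarith : (0:ℝ) ≤ 1+ε)
                    (mul_nonneg haS.le (rpow_nonneg (by linarith [ht.2]) _))),
                  ← ENNReal.ofReal_mul (by positivity)]
                congr 1
                have : (0:ℝ) ≤ (y - t)^p := rpow_nonneg (by linarith [ht.2]) _
                ring
      _ = ENNReal.ofReal ((1+ε)*b0) * (ENNReal.ofReal q * (ENNReal.ofReal ((1+ε)*aS)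
            * ENNReal.ofReal (y^(p+q) * B))) := by
          rw [lintegral_const_mul' _ _ ENNReal.ofReal_ne_top, beta_lintegral' hp hq hy]
      _ = ENNReal.ofReal ((1+ε)^2 * (aS * b0 * (q * B) * y^(p+q))) := by
          rw [← ENNReal.ofReal_mul (by positivity), ← ENNReal.ofReal_mul (by positivity),
            ← ENNReal.ofReal_mul (by positivity)]
          congr 1; ring
  have hlo : ENNReal.ofReal ((1-ε)^2 * (aS * b0 * (q * B) * y^(p+q)))
      ≤ ∫⁻ x, ν (Iic (y - x)) ∂μ := by
    have h1ε : (0:ℝ) ≤ 1 - ε := by linarith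
    calc ENNReal.ofReal ((1-ε)^2 * (aS * b0 * (q * B) * y^(p+q)))
        = ENNReal.ofReal ((1-ε)*b0) * (ENNReal.ofReal q * (ENNReal.ofReal ((1-ε)*aS)
            * ENNReal.ofReal (y^(p+q) * B))) := by
          rw [← ENNReal.ofReal_mul (by positivity), ← ENNReal.ofReal_mul (by positivity),
            ← ENNReal.ofReal_mul (by positivity)]
          congr 1; ring
      _ = ENNReal.ofReal ((1-ε)*b0) * (ENNReal.ofReal q
            * ∫⁻ t in Ioo 0 y, ENNReal.ofReal ((1-ε)*aS)
                * ENNReal.ofReal (t^(q-1) * (y - t)^p) ∂volume) := by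
          rw [lintegral_const_mul' _ _ ENNReal.ofReal_ne_top, beta_lintegral' hp hq hy]
      _ ≤ ENNReal.ofReal ((1-ε)*b0) * (ENNReal.ofReal q
            * ∫⁻ t in Ioo 0 y, μ (Iic (y - t)) * ENNReal.ofReal (t ^ (q - 1))) := by
          refine mul_le_mul_right (mul_le_mul_right ?_ _) _
          refine setLIntegral_mono' measurableSet_Ioo fun t ht => ?_
          calc ENNReal.ofReal ((1-ε)*aS) * ENNReal.ofReal (t^(q-1) * (y - t)^p)
              = ENNReal.ofReal ((1-ε)*(aS*(y-t)^p)) * ENNReal.ofReal (t ^ (q - 1)) := by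
                rw [← ENNReal.ofReal_mul (mul_nonneg h1ε haS.le),
                  ← ENNReal.ofReal_mul (mul_nonneg h1ε
                    (mul_nonneg haS.le (rpow_nonneg (by linarith [ht.2]) _)))]
                congr 1
                have : (0:ℝ) ≤ (y - t)^p := rpow_nonneg (by linarith [ht.2]) _
                ring
            _ ≤ μ (Iic (y - t)) * ENNReal.ofReal (t ^ (q - 1)) :=
                mul_le_mul_left (hμb (y - t) (hyp t ht)).1 _
      _ = ENNReal.ofReal ((1-ε)*b0) * ∫⁻ x in Icc 0 y, ENNReal.ofReal ((y - x)^q) ∂μ := by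
          rw [hlayer, hK]
      _ = ∫⁻ x in Icc 0 y, ENNReal.ofReal ((1-ε)*b0) * ENNReal.ofReal ((y - x)^q) ∂μ :=
          (lintegral_const_mul' _ _ ENNReal.ofReal_ne_top).symm
      _ ≤ ∫⁻ x in Icc 0 y, ν (Iic (y - x)) ∂μ := by
          refine setLIntegral_mono' measurableSet_Icc fun x hx => ?_
          rw [← ENNReal.ofReal_mul (by positivity)]
          rcases hx.2.eq_or_lt with h | h
          · have hyx : y - x = 0 := by rw [h]; ring
            rw [hyx, Real.zero_rpow hq.ne', mul_zero, ENNReal.ofReal_zero]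
            exact zero_le
          · refine le_trans (le_of_eq ?_) (hνb (y - x) ⟨by linarith, by linarith [hx.1]⟩).1
            congr 1; ring
      _ = ∫⁻ x, ν (Iic (y - x)) ∂μ := hT.symm
  exact ⟨hlo, hup⟩

lemma const_eq (M : ℕ) (hM : 1 ≤ M) (D : ℝ) (hD : 0 < D) :
    (2 ^ M / π ^ ((M:ℝ)/2) * D ^ ((M:ℝ)/2) / (Nat.factorial M))
      * (2 * D ^ ((1:ℝ)/2) / ((M:ℝ) ^ ((1:ℝ)/2) * Real.sqrt π))
      * (((1:ℝ)/2) * (Real.Gamma ((1:ℝ)/2) * Real.Gamma ((M:ℝ)/2 + 1)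
          / Real.Gamma ((1:ℝ)/2 + ((M:ℝ)/2 + 1))))
    = 2 ^ M * D ^ (((M:ℝ) + 1) / 2) * betaFn (3/2) ((M:ℝ)/2)
        / (π ^ ((M:ℝ)/2) * (Nat.factorial (M - 1)) * (M:ℝ) ^ ((1:ℝ)/2) * Real.Gamma (1/2)) := by
  have hMR : (0:ℝ) < M := by exact_mod_cast hM
  have hπ := Real.pi_pos
  have hfac : (Nat.factorial M : ℝ) = M * (Nat.factorial (M-1)) := by
    rw [← Nat.cast_mul, Nat.mul_factorial_pred (by omega)]
  have hΓp1 : Real.Gamma ((M:ℝ)/2 + 1) = ((M:ℝ)/2) * Real.Gamma ((M:ℝ)/2) :=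
    Real.Gamma_add_one (div_pos hMR two_pos).ne'
  have hΓ32 : Real.Gamma (3/2 : ℝ) = (1/2 : ℝ) * Real.Gamma (1/2 : ℝ) := by
    rw [show (3:ℝ)/2 = 1/2 + 1 by norm_num, Real.Gamma_add_one (by norm_num)]
  have hsq : Real.sqrt π = Real.Gamma (1/2 : ℝ) := Real.Gamma_one_half_eq.symm
  have hD2 : D ^ ((M:ℝ)/2) * D ^ ((1:ℝ)/2) = D ^ (((M:ℝ) + 1)/2) := by
    rw [← Real.rpow_add hD]; congr 1; ring
  have hΓarg : (1:ℝ)/2 + ((M:ℝ)/2 + 1) = 3/2 + (M:ℝ)/2 := by ring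
  rw [betaFn, hΓarg, hΓ32, hΓp1, hfac, hsq]
  have h1 : Real.Gamma (3/2 + (M:ℝ)/2) ≠ 0 := (Real.Gamma_pos_of_pos (by linarith [div_pos hMR (two_pos (α := ℝ))])).ne'
  have h2 : Real.Gamma ((1:ℝ)/2) ≠ 0 := (Real.Gamma_pos_of_pos (by norm_num)).ne'
  have h3 : π ^ ((M:ℝ)/2) ≠ 0 := (Real.rpow_pos_of_pos hπ _).ne'
  have h4 : (M:ℝ) ^ ((1:ℝ)/2) ≠ 0 := (Real.rpow_pos_of_pos hMR _).ne'
  have h5 : (Nat.factorial (M-1) : ℝ) ≠ 0 := by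
    exact_mod_cast (Nat.factorial_pos (M-1)).ne'
  rw [← hD2]
  field_simp
end Aux

set_option maxHeartbeats 1600000 in
theorem stmt_9 {Ω : Type*} [MeasurableSpace Ω] (P : Measure Ω) [IsProbabilityMeasure P]
    (M : ℕ) (hM : 1 ≤ M) (d α : ℝ) (hd : 0 ≤ d) (hα : 0 < α)
    (Zs Z0 : Ω → ℝ) (hZsmeas : Measurable Zs) (hZ0meas : Measurable Z0)
    (hZs0 : ∀ ω, 0 ≤ Zs ω) (hZ00 : ∀ ω, 0 ≤ Z0 ω)
    (hindep : IndepFun Zs Z0 P)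
    (hFZs : Tendsto (fun z : ℝ =>
        (P {ω | Zs ω ≤ z}).toReal /
          (2 ^ M / π ^ ((M : ℝ) / 2) * (1 + d ^ α) ^ ((M : ℝ) / 2) * z ^ ((M : ℝ) / 2) /
            (Nat.factorial M)))
      (𝓝[>] 0) (𝓝 1))
    (hFZ0 : Tendsto (fun z : ℝ =>
        (P {ω | Z0 ω ≤ z}).toReal /
          (2 * (1 + d ^ α) ^ ((1:ℝ) / 2) * z ^ ((1:ℝ) / 2) /
            ((M : ℝ) ^ ((1:ℝ) / 2) * Real.sqrt π)))
      (𝓝[>] 0) (𝓝 1)) :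
    Tendsto (fun y : ℝ =>
        (P {ω | Zs ω + Z0 ω ≤ y}).toReal /
          (2 ^ M * (1 + d ^ α) ^ (((M : ℝ) + 1) / 2) * betaFn (3 / 2) ((M : ℝ) / 2) /
              (π ^ ((M : ℝ) / 2) * (Nat.factorial (M - 1)) * (M : ℝ) ^ ((1:ℝ) / 2) *
                Real.Gamma (1 / 2)) *
            y ^ (((M : ℝ) + 1) / 2)))
      (𝓝[>] 0) (𝓝 1) := by
  classical
  have hMR : (0:ℝ) < M := by exact_mod_cast hM
  have hdα : (0:ℝ) ≤ d ^ α := Real.rpow_nonneg hd α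
  have hD : (0:ℝ) < 1 + d ^ α := by linarith
  have hπ := Real.pi_pos
  set p : ℝ := (M:ℝ)/2 with hpdef
  set q : ℝ := (1:ℝ)/2 with hqdef
  have hp : 0 < p := div_pos hMR two_pos
  have hq : 0 < q := one_half_pos
  set aS : ℝ := 2 ^ M / π ^ p * (1 + d ^ α) ^ p / (Nat.factorial M) with haSdef
  set b0 : ℝ := 2 * (1 + d ^ α) ^ q / ((M:ℝ) ^ q * Real.sqrt π) with hb0def
  have haS : 0 < aS := by
    refine div_pos (mul_pos (div_pos (by positivity) (Real.rpow_pos_of_pos hπ _))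
      (Real.rpow_pos_of_pos hD _)) ?_
    exact_mod_cast Nat.factorial_pos M
  have hb0pos : 0 < b0 := by
    refine div_pos (by positivity) ?_
    exact mul_pos (Real.rpow_pos_of_pos hMR _) (Real.sqrt_pos.mpr hπ)
  set B : ℝ := Real.Gamma q * Real.Gamma (p+1) / Real.Gamma (q+(p+1)) with hBdef
  have hBpos : 0 < B :=
    div_pos (mul_pos (Real.Gamma_pos_of_pos hq) (Real.Gamma_pos_of_pos (by linarith)))
      (Real.Gamma_pos_of_pos (by linarith))
  set cM : ℝ := aS * b0 * (q * B) with hcMdef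
  have hcMpos : 0 < cM := mul_pos (mul_pos haS hb0pos) (mul_pos hq hBpos)
  -- the constant in the statement
  have hceq : 2 ^ M * (1 + d ^ α) ^ (((M : ℝ) + 1) / 2) * betaFn (3 / 2) p /
      (π ^ p * (Nat.factorial (M - 1)) * (M : ℝ) ^ q * Real.Gamma q) = cM := by
    rw [hcMdef, hBdef, haSdef, hb0def]
    exact (const_eq M hM (1 + d ^ α) hD).symm
  -- mapped measures
  set μ : Measure ℝ := P.map Zs with hμdef
  set ν : Measure ℝ := P.map Z0 with hνdef
  haveI hμprob : IsProbabilityMeasure μ := Measure.isProbabilityMeasure_map hZsmeas.aemeasurable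
  haveI hνprob : IsProbabilityMeasure ν := Measure.isProbabilityMeasure_map hZ0meas.aemeasurable
  have hFμ : ∀ z, μ (Set.Iic z) = P {ω | Zs ω ≤ z} := fun z => by
    rw [hμdef, Measure.map_apply hZsmeas measurableSet_Iic]; rfl
  have hFν : ∀ z, ν (Set.Iic z) = P {ω | Z0 ω ≤ z} := fun z => by
    rw [hνdef, Measure.map_apply hZ0meas measurableSet_Iic]; rfl
  -- normalized limit hypotheses
  have hFZs' : Tendsto (fun z : ℝ => (μ (Set.Iic z)).toReal / (aS * z ^ p)) (𝓝[>] 0) (𝓝 1) := by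
    refine hFZs.congr fun z => ?_
    rw [hFμ z, haSdef]
    congr 1
    ring
  have hFZ0' : Tendsto (fun z : ℝ => (ν (Set.Iic z)).toReal / (b0 * z ^ q)) (𝓝[>] 0) (𝓝 1) := by
    refine hFZ0.congr fun z => ?_
    rw [hFν z, hb0def]
    congr 1
    ring
  -- vanishing at 0
  have hν00 : ν (Set.Iic 0) = 0 := by
    have hmono : ∀ z : ℝ, 0 < z → (ν (Set.Iic 0)).toReal ≤ (ν (Set.Iic z)).toReal := fun z hz =>
      ENNReal.toReal_mono (measure_ne_top _ _) (measure_mono (Set.Iic_subset_Iic.mpr hz.le))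
    have h0 := F_zero hb0pos hq hFZ0' hmono ENNReal.toReal_nonneg
    rcases (ENNReal.toReal_eq_zero_iff _).mp h0 with h | h
    · exact h
    · exact absurd h (measure_ne_top _ _)
  have hμIio : μ (Set.Iio 0) = 0 := by
    rw [hμdef, Measure.map_apply hZsmeas measurableSet_Iio]
    have : Zs ⁻¹' (Set.Iio 0) = ∅ :=
      Set.eq_empty_iff_forall_notMem.mpr fun ω hω => (not_lt.mpr (hZs0 ω)) hω
    rw [this, measure_empty]
  have hνIio : ν (Set.Iio 0) = 0 := by
    rw [hνdef, Measure.map_apply hZ0meas measurableSet_Iio]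
    have : Z0 ⁻¹' (Set.Iio 0) = ∅ :=
      Set.eq_empty_iff_forall_notMem.mpr fun ω hω => (not_lt.mpr (hZ00 ω)) hω
    rw [this, measure_empty]
  -- the convolution formula
  have hconv : ∀ y : ℝ, P {ω | Zs ω + Z0 ω ≤ y} = ∫⁻ x, ν (Set.Iic (y - x)) ∂μ := by
    intro y
    have hmap : P.map (fun ω => (Zs ω, Z0 ω)) = μ.prod ν :=
      (indepFun_iff_map_prod_eq_prod_map_map hZsmeas.aemeasurable hZ0meas.aemeasurable).mp hindep
    have hms : MeasurableSet {pr : ℝ × ℝ | pr.1 + pr.2 ≤ y} :=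
      (isClosed_le (continuous_fst.add continuous_snd) continuous_const).measurableSet
    have hpre : {ω | Zs ω + Z0 ω ≤ y}
        = (fun ω => (Zs ω, Z0 ω)) ⁻¹' {pr : ℝ × ℝ | pr.1 + pr.2 ≤ y} := rfl
    rw [hpre, ← Measure.map_apply (hZsmeas.prodMk hZ0meas) hms, hmap, Measure.prod_apply hms]
    refine lintegral_congr fun x => ?_
    congr 1
    ext b
    simp only [Set.mem_preimage, Set.mem_setOf_eq, Set.mem_Iic]
    constructor <;> intro <;> linarith
  have hpq : (((M : ℝ) + 1) / 2) = p + q := by rw [hpdef, hqdef]; ring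
  -- main argument
  rw [hceq, hpq]
  refine Metric.tendsto_nhds.mpr fun ε hε => ?_
  set ε' : ℝ := min (ε/4) (1/2) with hε'def
  have hε'pos : 0 < ε' := lt_min (by linarith) one_half_pos
  have hε'le : ε' ≤ ε/4 := min_le_left _ _
  have hε'half : ε' ≤ 1/2 := min_le_right _ _
  obtain ⟨δs, hδs, hbs⟩ := sandwich haS hFZs' hε'pos
  obtain ⟨δ0, hδ0, hb0'⟩ := sandwich hb0pos hFZ0' hε'pos
  set δ : ℝ := min δs δ0 with hδdef
  have hδpos : 0 < δ := lt_min hδs hδ0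
  have hμb : ∀ z ∈ Set.Ioo (0:ℝ) δ, ENNReal.ofReal ((1-ε')*(aS*z^p)) ≤ μ (Set.Iic z)
      ∧ μ (Set.Iic z) ≤ ENNReal.ofReal ((1+ε')*(aS*z^p)) := by
    intro z hz
    have h := hbs z ⟨hz.1, lt_of_lt_of_le hz.2 (min_le_left _ _)⟩
    rw [← ENNReal.ofReal_toReal (measure_ne_top μ (Set.Iic z))]
    exact ⟨ENNReal.ofReal_le_ofReal h.1, ENNReal.ofReal_le_ofReal h.2⟩
  have hνb : ∀ z ∈ Set.Ioo (0:ℝ) δ, ENNReal.ofReal ((1-ε')*(b0*z^q)) ≤ ν (Set.Iic z)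
      ∧ ν (Set.Iic z) ≤ ENNReal.ofReal ((1+ε')*(b0*z^q)) := by
    intro z hz
    have h := hb0' z ⟨hz.1, lt_of_lt_of_le hz.2 (min_le_right _ _)⟩
    rw [← ENNReal.ofReal_toReal (measure_ne_top ν (Set.Iic z))]
    exact ⟨ENNReal.ofReal_le_ofReal h.1, ENNReal.ofReal_le_ofReal h.2⟩
  filter_upwards [Ioo_mem_nhdsGT_of_mem (Set.left_mem_Ico.mpr hδpos)] with y hy
  have hy0 : (0:ℝ) < y := hy.1
  have hyδ : y < δ := hy.2
  have hme := main_est hp hq haS hb0pos hμIio hνIio hν00 hε'pos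
    (by linarith) hμb hνb hy0 hyδ
  have hcMy : 0 < cM * y ^ (p+q) := mul_pos hcMpos (Real.rpow_pos_of_pos hy0 _)
  have hne : (∫⁻ x, ν (Set.Iic (y - x)) ∂μ) ≠ ⊤ := by
    rw [← hconv y]; exact measure_ne_top _ _
  have hHub : (P {ω | Zs ω + Z0 ω ≤ y}).toReal ≤ (1+ε')^2 * (cM * y^(p+q)) := by
    rw [hconv y]
    calc (∫⁻ x, ν (Set.Iic (y - x)) ∂μ).toReal
        ≤ (ENNReal.ofReal ((1+ε')^2 * (aS * b0 * (q * B) * y^(p+q)))).toReal :=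
          ENNReal.toReal_mono ENNReal.ofReal_ne_top hme.2
      _ = (1+ε')^2 * (cM * y^(p+q)) := by
          rw [ENNReal.toReal_ofReal (by positivity), hcMdef]
  have hHlb : (1-ε')^2 * (cM * y^(p+q)) ≤ (P {ω | Zs ω + Z0 ω ≤ y}).toReal := by
    rw [hconv y]
    have h1ε : (0:ℝ) ≤ 1 - ε' := by linarith
    calc (1-ε')^2 * (cM * y^(p+q))
        = (ENNReal.ofReal ((1-ε')^2 * (aS * b0 * (q * B) * y^(p+q)))).toReal := by
          rw [ENNReal.toReal_ofReal (by positivity), hcMdef]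
      _ ≤ (∫⁻ x, ν (Set.Iic (y - x)) ∂μ).toReal := ENNReal.toReal_mono hne hme.1
  rw [Real.dist_eq]
  set R : ℝ := (P {ω | Zs ω + Z0 ω ≤ y}).toReal with hRdef
  have h1 : (1-ε')^2 ≤ R / (cM * y^(p+q)) := (le_div_iff₀ hcMy).mpr (by linarith)
  have h2 : R / (cM * y^(p+q)) ≤ (1+ε')^2 := (div_le_iff₀ hcMy).mpr (by linarith)
  rw [abs_lt]
  constructor
  · nlinarith [sq_nonneg ε']
  · nlinarith [sq_nonneg ε', mul_le_mul_of_nonneg_left hε'half hε'pos.le]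
end
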